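/- Let A be a signed interaction matrix that is strongly connected and periodic. Then: (i) A is divergent if and only if A is opposition bipartite; (ii) A induces a neutral consensus if and only if A is not opposition bipartite. -/

import Mathlib

open Filter

variable {n : ℕ}

/-- Entrywise absolute value of a matrix. -/
def absMat (A : Matrix (Fin n) (Fin n) ℝ) : Matrix (Fin n) (Fin n) ℝ :=
  A.map fun x => |x|

/-- `A` is strongly connected: for all `i j` there is `k ≥ 1` with `(|A|^k)_{ij} > 0`. -/
def StronglyConnected (A : Matrix (Fin n) (Fin n) ℝ) : Prop :=
  ∀ i j, ∃ k : ℕ, 1 ≤ k ∧ 0 < (absMat A ^ k) i j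

/-- `A` is aperiodic: for each `i`, the gcd of `{k ≥ 1 : (|A|^k)_{ii} > 0}` is `1`,
phrased as: every common divisor of that set equals `1`. -/
def Aperiodic (A : Matrix (Fin n) (Fin n) ℝ) : Prop :=
  ∀ i, ∀ d : ℕ, (∀ k : ℕ, 1 ≤ k → 0 < (absMat A ^ k) i i → d ∣ k) → d = 1

/-- `A` is opposition bipartite: a two-set partition (given by `S` and its
complement) with nonnegative entries within sets and nonpositive across. -/
def OppBip (A : Matrix (Fin n) (Fin n) ℝ) : Prop :=
  ∃ S : Set (Fin n), ∀ i j,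
    (((i ∈ S ∧ j ∈ S) ∨ (i ∉ S ∧ j ∉ S)) → 0 ≤ A i j) ∧
    (((i ∈ S ∧ j ∉ S) ∨ (i ∉ S ∧ j ∈ S)) → A i j ≤ 0)

/-- `A` is reverse opposition bipartite: nonpositive entries within sets and
nonnegative across. -/
def RevOppBip (A : Matrix (Fin n) (Fin n) ℝ) : Prop :=
  ∃ S : Set (Fin n), ∀ i j,
    (((i ∈ S ∧ j ∈ S) ∨ (i ∉ S ∧ j ∉ S)) → A i j ≤ 0) ∧
    (((i ∈ S ∧ j ∉ S) ∨ (i ∉ S ∧ j ∈ S)) → 0 ≤ A i j)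

/-- `A` is divergent: some initial vector has no limit under iteration. -/
def Divergent (A : Matrix (Fin n) (Fin n) ℝ) : Prop :=
  ∃ b₀ : Fin n → ℝ, ¬ ∃ L : Fin n → ℝ,
    Tendsto (fun t => (A ^ t).mulVec b₀) atTop (nhds L)

/-- `A` induces a neutral consensus: iterates converge to `0` from every start. -/
def NeutralConsensus (A : Matrix (Fin n) (Fin n) ℝ) : Prop :=
  ∀ b₀ : Fin n → ℝ, Tendsto (fun t => (A ^ t).mulVec b₀) atTop (nhds 0)

/-- A vector is a polarization if its entries take at most two values. -/
def IsPolarization (p : Fin n → ℝ) : Prop :=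
  ∃ a b : ℝ, ∀ i, p i = a ∨ p i = b

/-- `A` induces a nontrivial polarization: from every start the limit exists
and is a polarization, and from some start the limit is nonzero. -/
def InducesNontrivialPolarization (A : Matrix (Fin n) (Fin n) ℝ) : Prop :=
  (∀ b₀ : Fin n → ℝ, ∃ L : Fin n → ℝ,
      Tendsto (fun t => (A ^ t).mulVec b₀) atTop (nhds L) ∧ IsPolarization L) ∧
  (∃ (b₀ L : Fin n → ℝ),
      Tendsto (fun t => (A ^ t).mulVec b₀) atTop (nhds L) ∧ L ≠ 0)

section AuxProofs
open Matrix
variable {n : ℕ}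

lemma absMat_apply (A : Matrix (Fin n) (Fin n) ℝ) (i j) : absMat A i j = |A i j| := rfl

lemma absMat_symm {A : Matrix (Fin n) (Fin n) ℝ} (hsym : A.IsSymm) : (absMat A).IsSymm := by
  ext i j
  simp [Matrix.transpose_apply, absMat_apply, hsym.apply i j]

lemma pow_entry_nonneg (A : Matrix (Fin n) (Fin n) ℝ) (k : ℕ) (i j : Fin n) :
    0 ≤ (absMat A ^ k) i j := by
  induction k generalizing i j with
  | zero => simp [Matrix.one_apply]; positivity
  | succ m ih =>
    rw [pow_succ, Matrix.mul_apply]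
    exact Finset.sum_nonneg fun m' _ => mul_nonneg (ih i m') (abs_nonneg _)

lemma pow_entry_symm {A : Matrix (Fin n) (Fin n) ℝ} (hsym : A.IsSymm) (k : ℕ) (i j : Fin n) :
    (absMat A ^ k) j i = (absMat A ^ k) i j :=
  ((absMat_symm hsym).pow k).apply i j

lemma pow_mul_pos (A : Matrix (Fin n) (Fin n) ℝ) {a b : ℕ} {i m j : Fin n}
    (ha : 0 < (absMat A ^ a) i m) (hb : 0 < (absMat A ^ b) m j) :
    0 < (absMat A ^ (a + b)) i j := by
  rw [pow_add, Matrix.mul_apply]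
  have h1 : (absMat A ^ a) i m * (absMat A ^ b) m j ≤
      ∑ m', (absMat A ^ a) i m' * (absMat A ^ b) m' j :=
    Finset.single_le_sum (fun m' _ => mul_nonneg (pow_entry_nonneg A a i m')
      (pow_entry_nonneg A b m' j)) (Finset.mem_univ m)
  exact lt_of_lt_of_le (mul_pos ha hb) h1

lemma row_nonzero {A : Matrix (Fin n) (Fin n) ℝ} (hrow : ∀ i, ∑ j, |A i j| = 1) (i : Fin n) :
    ∃ j, A i j ≠ 0 := by
  by_contra h
  push_neg at h
  have := hrow i
  simp [h] at this

lemma exists_parity {A : Matrix (Fin n) (Fin n) ℝ} (hsym : A.IsSymm)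
    (hrow : ∀ i, ∑ j, |A i j| = 1) (hsc : StronglyConnected A) (hper : ¬ Aperiodic A) :
    ∃ e : Fin n → ℝ, (∀ i, e i = 1 ∨ e i = -1) ∧ ∀ i j, A i j ≠ 0 → e j = -e i := by
  classical
  simp only [Aperiodic, not_forall] at hper
  obtain ⟨i₀, d, hdvd, hd1⟩ := hper
  -- (B^2)_{i₀ i₀} > 0
  obtain ⟨j₀, hj₀⟩ := row_nonzero hrow i₀
  have h2 : 0 < (absMat A ^ 2) i₀ i₀ := by
    have h1 : 0 < (absMat A ^ 1) i₀ j₀ := by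
      rw [pow_one, absMat_apply]; exact abs_pos.mpr hj₀
    have h1' : 0 < (absMat A ^ 1) j₀ i₀ := by rw [pow_entry_symm hsym]; exact h1
    exact pow_mul_pos A h1 h1'
  have hd2 : d ∣ 2 := hdvd 2 (by norm_num) h2
  have hd : d = 2 := by
    rcases (Nat.dvd_prime Nat.prime_two).mp hd2 with h | h
    · exact absurd h hd1
    · exact h
  subst hd
  have hret : ∀ k : ℕ, 0 < (absMat A ^ k) i₀ i₀ → 2 ∣ k := by
    intro k hk
    rcases Nat.eq_zero_or_pos k with rfl | hk1
    · exact ⟨0, rfl⟩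
    · exact hdvd k hk1 hk
  have K : ∀ (a b : ℕ) (j : Fin n), 0 < (absMat A ^ a) i₀ j → 0 < (absMat A ^ b) i₀ j →
      2 ∣ (a + b) := by
    intro a b j ha hb
    have hb' : 0 < (absMat A ^ b) j i₀ := by rw [pow_entry_symm hsym]; exact hb
    exact hret (a + b) (pow_mul_pos A ha hb')
  set P : Fin n → Prop := fun j => ∃ k, Even k ∧ 0 < (absMat A ^ k) i₀ j with hP
  refine ⟨fun j => if P j then 1 else -1, fun j => by by_cases h : P j <;> simp [h], ?_⟩
  intro i j hij
  obtain ⟨k, hk1, hk⟩ := hsc i₀ i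
  have hBij : 0 < (absMat A ^ 1) i j := by
    rw [pow_one, absMat_apply]; exact abs_pos.mpr hij
  have hkj : 0 < (absMat A ^ (k + 1)) i₀ j := pow_mul_pos A hk hBij
  by_cases hPi : P i
  · obtain ⟨k', hk'e, hk'⟩ := id hPi
    have hkk' : 2 ∣ (k + k') := K k k' i hk hk'
    have hkeven : Even k := by
      rw [Nat.even_iff] at hk'e ⊢; omega
    have hPj : ¬ P j := by
      rintro ⟨a, hae, ha⟩
      have := K a (k + 1) j ha hkj
      rw [Nat.even_iff] at hae hkeven
      omega
    simp [hPi, hPj]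
  · have hkodd : ¬ Even k := fun he => hPi ⟨k, he, hk⟩
    have hPj : P j := ⟨k + 1, by rw [Nat.even_iff] at hkodd ⊢; omega, hkj⟩
    simp [hPi, hPj]

lemma mulVec_apply (A : Matrix (Fin n) (Fin n) ℝ) (v : Fin n → ℝ) (i : Fin n) :
    (A *ᵥ v) i = ∑ j, A i j * v j := by
  simp [Matrix.mulVec, dotProduct]

lemma eig_abs_le {A : Matrix (Fin n) (Fin n) ℝ} (hrow : ∀ i, ∑ j, |A i j| = 1)
    {μ : ℝ} {v : Fin n → ℝ} (hv : v ≠ 0) (heig : A *ᵥ v = μ • v) : |μ| ≤ 1 := by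
  obtain ⟨j₀, hj₀⟩ := Function.ne_iff.mp hv
  obtain ⟨i, -, hi⟩ := Finset.exists_max_image Finset.univ (fun i => |v i|) ⟨j₀, Finset.mem_univ j₀⟩
  have hvi : 0 < |v i| := lt_of_lt_of_le (abs_pos.mpr hj₀) (hi j₀ (Finset.mem_univ j₀))
  have key : |μ| * |v i| ≤ 1 * |v i| := by
    rw [one_mul, ← abs_mul]
    have h1 : μ * v i = (A *ᵥ v) i := by rw [heig]; rfl
    rw [h1, mulVec_apply]
    calc |∑ j, A i j * v j| ≤ ∑ j, |A i j * v j| := Finset.abs_sum_le_sum_abs _ _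
      _ = ∑ j, |A i j| * |v j| := by simp [abs_mul]
      _ ≤ ∑ j, |A i j| * |v i| := Finset.sum_le_sum fun j _ =>
          mul_le_mul_of_nonneg_left (hi j (Finset.mem_univ j)) (abs_nonneg _)
      _ = |v i| := by rw [← Finset.sum_mul, hrow i, one_mul]
  exact le_of_mul_le_mul_right (by linarith) hvi

lemma eig_one_oppbip {A : Matrix (Fin n) (Fin n) ℝ} (hsym : A.IsSymm)
    (hrow : ∀ i, ∑ j, |A i j| = 1) (hsc : StronglyConnected A)
    {v : Fin n → ℝ} (hv : v ≠ 0) (heig : A *ᵥ v = v) : OppBip A := by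
  classical
  have heig' : ∀ i, ∑ j, A i j * v j = v i := by
    intro i; rw [← mulVec_apply, heig]
  have hle : ∀ i ∈ Finset.univ, |v i| ≤ ∑ j, |A i j| * |v j| := by
    intro i _
    calc |v i| = |∑ j, A i j * v j| := by rw [heig' i]
      _ ≤ ∑ j, |A i j * v j| := Finset.abs_sum_le_sum_abs _ _
      _ = ∑ j, |A i j| * |v j| := by simp [abs_mul]
  have hcol : ∀ j, ∑ i, |A i j| = 1 := by
    intro j
    calc ∑ i, |A i j| = ∑ i, |A j i| := by
          refine Finset.sum_congr rfl fun i _ => ?_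
          rw [hsym.apply i j]
      _ = 1 := hrow j
  have hsum : ∑ i, |v i| = ∑ i, ∑ j, |A i j| * |v j| := by
    rw [Finset.sum_comm]
    calc ∑ i, |v i| = ∑ j, (∑ i, |A i j|) * |v j| := by
          refine Finset.sum_congr rfl fun j _ => ?_
          rw [hcol j, one_mul]
      _ = ∑ j, ∑ i, |A i j| * |v j| := by
          refine Finset.sum_congr rfl fun j _ => ?_
          rw [Finset.sum_mul]
  have key : ∀ i, ∑ j, |A i j| * |v j| = |v i| := by
    intro i
    exact ((Finset.sum_eq_sum_iff_of_le hle).mp hsum i (Finset.mem_univ i)).symm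
  -- all entries of v are nonzero
  have habs : absMat A *ᵥ (fun j => |v j|) = fun i => |v i| := by
    funext i
    rw [mulVec_apply]
    simpa only [absMat_apply] using key i
  have hpow : ∀ k, (absMat A ^ k) *ᵥ (fun j => |v j|) = fun i => |v i| := by
    intro k
    induction k with
    | zero => simp [Matrix.one_mulVec]
    | succ m ih =>
      rw [pow_succ', ← Matrix.mulVec_mulVec, ih, habs]
  have vpos : ∀ i, v i ≠ 0 := by
    intro i hvi
    obtain ⟨j, hj⟩ := Function.ne_iff.mp hv
    obtain ⟨k, -, hk⟩ := hsc i j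
    have h0 : ∑ m, (absMat A ^ k) i m * |v m| = 0 := by
      have := congrFun (hpow k) i
      rw [mulVec_apply] at this
      rw [this, hvi, abs_zero]
    have hterm : (absMat A ^ k) i j * |v j| = 0 := by
      have := (Finset.sum_eq_zero_iff_of_nonneg (fun m _ =>
        mul_nonneg (pow_entry_nonneg A k i m) (abs_nonneg _))).mp h0 j (Finset.mem_univ j)
      exact this
    exact absurd hterm (ne_of_gt (mul_pos hk (abs_pos.mpr hj)))
  -- sign alignment
  have hterm : ∀ i j, 0 ≤ (if 0 < v i then (1:ℝ) else -1) * (A i j * v j) := by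
    intro i j
    set σ : ℝ := if 0 < v i then (1:ℝ) else -1 with hσ
    have hσabs : |σ| = 1 := by rw [hσ]; split <;> simp
    have hσv : σ * v i = |v i| := by
      by_cases h : 0 < v i
      · rw [hσ, if_pos h, one_mul, abs_of_pos h]
      · have hlt : v i < 0 := lt_of_le_of_ne (not_lt.mp h) (vpos i)
        rw [hσ, if_neg h, neg_one_mul, abs_of_neg hlt]
    have hsum1 : ∑ j', σ * (A i j' * v j') = |v i| := by
      rw [← Finset.mul_sum, heig' i, hσv]
    have hsum2 : ∑ j', |σ * (A i j' * v j')| = |v i| := by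
      calc ∑ j', |σ * (A i j' * v j')| = ∑ j', |A i j'| * |v j'| := by
            refine Finset.sum_congr rfl fun j' _ => ?_
            rw [abs_mul, hσabs, one_mul, abs_mul]
        _ = |v i| := key i
    have hptwise := (Finset.sum_eq_sum_iff_of_le
      (fun j' (_ : j' ∈ Finset.univ) => le_abs_self (σ * (A i j' * v j')))).mp
      (by rw [hsum1, hsum2]) j (Finset.mem_univ j)
    rw [hptwise]
    exact abs_nonneg _
  refine ⟨{i | 0 < v i}, fun i j => ⟨?_, ?_⟩⟩
  · rintro (⟨hi, hj⟩ | ⟨hi, hj⟩) <;> simp only [Set.mem_setOf_eq] at hi hj <;>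
      have h := hterm i j
    · rw [if_pos hi] at h
      nlinarith
    · rw [if_neg hi] at h
      have hj' : v j < 0 := lt_of_le_of_ne (not_lt.mp hj) (vpos j)
      nlinarith
  · rintro (⟨hi, hj⟩ | ⟨hi, hj⟩) <;> simp only [Set.mem_setOf_eq] at hi hj <;>
      have h := hterm i j
    · rw [if_pos hi] at h
      have hj' : v j < 0 := lt_of_le_of_ne (not_lt.mp hj) (vpos j)
      nlinarith
    · rw [if_neg hi] at h
      nlinarith

lemma eig_neg_one_to_one {A : Matrix (Fin n) (Fin n) ℝ} {e : Fin n → ℝ}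
    (he : ∀ i, e i = 1 ∨ e i = -1) (hee : ∀ i j, A i j ≠ 0 → e j = -e i)
    {w : Fin n → ℝ} (hw : w ≠ 0) (heig : A *ᵥ w = -w) :
    ∃ v : Fin n → ℝ, v ≠ 0 ∧ A *ᵥ v = v := by
  refine ⟨fun i => e i * w i, ?_, ?_⟩
  · obtain ⟨j, hj⟩ := Function.ne_iff.mp hw
    intro h
    have := congrFun h j
    simp only [Pi.zero_apply] at this
    rcases he j with h1 | h1 <;> rw [h1] at this <;> simp at this <;> exact hj this
  · funext i
    rw [mulVec_apply]
    have hterm : ∀ j, A i j * (e j * w j) = -e i * (A i j * w j) := by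
      intro j
      by_cases hij : A i j = 0
      · rw [hij]; ring
      · rw [hee i j hij]; ring
    calc ∑ j, A i j * (e j * w j) = ∑ j, -e i * (A i j * w j) :=
          Finset.sum_congr rfl fun j _ => hterm j
      _ = -e i * ∑ j, A i j * w j := by rw [Finset.mul_sum]
      _ = -e i * (-w i) := by rw [← mulVec_apply, heig]; rfl
      _ = e i * w i := by ring

lemma not_oppbip_neutral {A : Matrix (Fin n) (Fin n) ℝ} (hsym : A.IsSymm)
    (hrow : ∀ i, ∑ j, |A i j| = 1) (hsc : StronglyConnected A)
    {e : Fin n → ℝ} (he : ∀ i, e i = 1 ∨ e i = -1)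
    (hee : ∀ i j, A i j ≠ 0 → e j = -e i) (hnopp : ¬ OppBip A) :
    ∀ b₀ : Fin n → ℝ, Tendsto (fun t => (A ^ t) *ᵥ b₀) atTop (nhds 0) := by
  classical
  have hA : A.IsHermitian := by
    unfold Matrix.IsHermitian
    ext i j
    simp [Matrix.conjTranspose_apply, hsym.apply i j]
  set v : Fin n → Fin n → ℝ := fun i => ⇑(hA.eigenvectorBasis i) with hvdef
  set lam : Fin n → ℝ := hA.eigenvalues with hlamdef
  have hv : ∀ i, A *ᵥ v i = lam i • v i := fun i => hA.mulVec_eigenvectorBasis i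
  have hvne : ∀ i, v i ≠ 0 := by
    intro i hzero
    exact hA.eigenvectorBasis.orthonormal.ne_zero i (by ext j; exact congrFun hzero j)
  have hlam : ∀ i, |lam i| < 1 := by
    intro i
    have h1 : |lam i| ≤ 1 := eig_abs_le hrow (hvne i) (hv i)
    rcases lt_or_eq_of_le h1 with h | h
    · exact h
    · exfalso
      rcases (abs_eq (by norm_num : (0:ℝ) ≤ 1)).mp h with h2 | h2
      · exact hnopp (eig_one_oppbip hsym hrow hsc (hvne i)
          (by rw [hv i, h2, one_smul]))
      · obtain ⟨u, hu, hu2⟩ := eig_neg_one_to_one he hee (hvne i)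
          (by rw [hv i, h2, neg_one_smul])
        exact hnopp (eig_one_oppbip hsym hrow hsc hu hu2)
  intro b₀
  -- expand b₀ in the eigenbasis
  set E := WithLp.linearEquiv 2 ℝ (Fin n → ℝ) with hE
  set c : Fin n → ℝ := fun i => (hA.eigenvectorBasis.repr (E.symm b₀)) i with hc
  have hrepr : ∑ i, c i • hA.eigenvectorBasis i = E.symm b₀ :=
    hA.eigenvectorBasis.sum_repr (E.symm b₀)
  have hb₀ : b₀ = ∑ i, c i • v i := by
    have := congrArg E hrepr
    rw [map_sum] at this
    simp only [_root_.map_smul] at this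
    rw [E.apply_symm_apply] at this
    rw [← this]
    rfl
  have hiter : ∀ t, (A ^ t) *ᵥ b₀ = ∑ i, (lam i ^ t * c i) • v i := by
    intro t
    induction t with
    | zero => simpa [Matrix.one_mulVec] using hb₀
    | succ m ih =>
      rw [pow_succ', ← Matrix.mulVec_mulVec, ih]
      have hls : A *ᵥ (∑ i, (lam i ^ m * c i) • v i) =
          ∑ i, A *ᵥ ((lam i ^ m * c i) • v i) := by
        have := map_sum (Matrix.mulVecLin A) (fun i => (lam i ^ m * c i) • v i) Finset.univ
        simpa only [Matrix.mulVecLin_apply] using this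
      rw [hls]
      refine Finset.sum_congr rfl fun i _ => ?_
      rw [Matrix.mulVec_smul, hv i, smul_smul]
      congr 1
      ring
  have htend : Tendsto (fun t => ∑ i, (lam i ^ t * c i) • v i) atTop (nhds 0) := by
    have h0 : (0 : Fin n → ℝ) = ∑ _i : Fin n, (0 : Fin n → ℝ) := by simp
    rw [h0]
    refine tendsto_finset_sum _ fun i _ => ?_
    have h1 : Tendsto (fun t : ℕ => lam i ^ t * c i) atTop (nhds 0) := by
      simpa using (tendsto_pow_atTop_nhds_zero_of_abs_lt_one (hlam i)).mul_const (c i)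
    simpa using h1.smul_const (v i)
  exact (funext hiter : (fun t => (A ^ t) *ᵥ b₀) = _) ▸ htend

lemma oppbip_osc {A : Matrix (Fin n) (Fin n) ℝ} (hrow : ∀ i, ∑ j, |A i j| = 1)
    {e : Fin n → ℝ} (he : ∀ i, e i = 1 ∨ e i = -1)
    (hee : ∀ i j, A i j ≠ 0 → e j = -e i) (hopp : OppBip A) :
    ∃ b₀ : Fin n → ℝ, (∀ i, b₀ i = 1 ∨ b₀ i = -1) ∧
      ∀ t, (A ^ t) *ᵥ b₀ = ((-1:ℝ)^t) • b₀ := by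
  classical
  obtain ⟨S, hS⟩ := hopp
  set s : Fin n → ℝ := fun i => if i ∈ S then 1 else -1 with hs
  refine ⟨fun i => s i * e i, ?_, ?_⟩
  · intro i
    rcases he i with h | h <;> by_cases hi : i ∈ S <;> simp [hs, hi, h]
  · have hsign : ∀ i j, A i j = s i * s j * |A i j| := by
      intro i j
      by_cases hi : i ∈ S <;> by_cases hj : j ∈ S
      · have := (hS i j).1 (Or.inl ⟨hi, hj⟩)
        simp [hs, hi, hj, abs_of_nonneg this]
      · have := (hS i j).2 (Or.inl ⟨hi, hj⟩)
        simp [hs, hi, hj, abs_of_nonpos this]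
      · have := (hS i j).2 (Or.inr ⟨hi, hj⟩)
        simp [hs, hi, hj, abs_of_nonpos this]
      · have := (hS i j).1 (Or.inr ⟨hi, hj⟩)
        simp [hs, hi, hj, abs_of_nonneg this]
    have hstep : A *ᵥ (fun i => s i * e i) = -(fun i => s i * e i) := by
      funext i
      rw [mulVec_apply]
      have hterm : ∀ j, A i j * (s j * e j) = -(s i * e i) * |A i j| := by
        intro j
        by_cases hij : A i j = 0
        · simp [hij]
        · have h2 : s j * s j = 1 := by by_cases h : j ∈ S <;> simp [hs, h]
          conv_lhs => rw [hsign i j, hee i j hij]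
          linear_combination (-(s i * e i * |A i j|)) * h2
      calc ∑ j, A i j * (s j * e j) = ∑ j, -(s i * e i) * |A i j| :=
            Finset.sum_congr rfl fun j _ => hterm j
        _ = -(s i * e i) * ∑ j, |A i j| := by rw [Finset.mul_sum]
        _ = -(s i * e i) := by rw [hrow i, mul_one]
        _ = (-(fun i => s i * e i) : Fin n → ℝ) i := rfl
    intro t
    induction t with
    | zero => simp [Matrix.one_mulVec]
    | succ m ih =>
      rw [pow_succ', ← Matrix.mulVec_mulVec, ih, Matrix.mulVec_smul, hstep,
        pow_succ, mul_comm ((-1:ℝ)^m), smul_neg, neg_one_mul, neg_smul]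

end AuxProofs

/-- for a strongly connected, periodic signed interaction matrix:
(i) divergence iff opposition bipartite; (ii) neutral consensus iff not
opposition bipartite. -/
theorem stmt_11 (n : ℕ) (hn : 2 ≤ n) (A : Matrix (Fin n) (Fin n) ℝ)
    (hsym : A.IsSymm) (hdiag : ∀ i, A i i = 0) (hrow : ∀ i, ∑ j, |A i j| = 1)
    (hsc : StronglyConnected A) (hper : ¬ Aperiodic A) :
    (Divergent A ↔ OppBip A) ∧
    (NeutralConsensus A ↔ ¬ OppBip A) := by
  classical
  obtain ⟨e, he, hee⟩ := exists_parity hsym hrow hsc hper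
  by_cases hopp : OppBip A
  · obtain ⟨b₀, hb1, hb2⟩ := oppbip_osc hrow he hee hopp
    have hi0 : b₀ ⟨0, by omega⟩ ≠ 0 := by
      rcases hb1 ⟨0, by omega⟩ with h | h <;> rw [h] <;> norm_num
    have hdiv : Divergent A := by
      refine ⟨b₀, ?_⟩
      rintro ⟨L, hL⟩
      have h2t : Filter.Tendsto (fun t : ℕ => 2 * t) atTop atTop :=
        Filter.tendsto_atTop_atTop.mpr fun b => ⟨b, fun a ha => by omega⟩
      have h2t1 : Filter.Tendsto (fun t : ℕ => 2 * t + 1) atTop atTop :=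
        Filter.tendsto_atTop_atTop.mpr fun b => ⟨b, fun a ha => by omega⟩
      have heven : Filter.Tendsto (fun _ : ℕ => b₀) atTop (nhds L) := by
        have h := hL.comp h2t
        have heq : ((fun t => (A ^ t).mulVec b₀) ∘ fun t : ℕ => 2 * t) =
            fun _ : ℕ => b₀ := by
          funext t
          show (A ^ (2 * t)).mulVec b₀ = b₀
          rw [hb2, pow_mul]
          norm_num
        rwa [heq] at h
      have hodd : Filter.Tendsto (fun _ : ℕ => -b₀) atTop (nhds L) := by
        have h := hL.comp h2t1
        have heq : ((fun t => (A ^ t).mulVec b₀) ∘ fun t : ℕ => 2 * t + 1) =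
            fun _ : ℕ => -b₀ := by
          funext t
          show (A ^ (2 * t + 1)).mulVec b₀ = -b₀
          rw [hb2, pow_succ, pow_mul]
          norm_num
        rwa [heq] at h
      have h1 : b₀ = L := tendsto_nhds_unique tendsto_const_nhds heven
      have h2 : -b₀ = L := tendsto_nhds_unique tendsto_const_nhds hodd
      have hx := congrFun h1 (⟨0, by omega⟩ : Fin n)
      have hy := congrFun h2 (⟨0, by omega⟩ : Fin n)
      simp only [Pi.neg_apply] at hy
      apply hi0
      linarith
    have hnnc : ¬ NeutralConsensus A := by
      intro hnc
      obtain ⟨b, hb⟩ := hdiv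
      exact hb ⟨0, hnc b⟩
    exact ⟨⟨fun _ => hopp, fun _ => hdiv⟩,
      ⟨fun hnc => absurd hnc hnnc, fun hno => absurd hopp hno⟩⟩
  · have hnc : NeutralConsensus A :=
      not_oppbip_neutral hsym hrow hsc he hee hopp
    have hnd : ¬ Divergent A := by
      rintro ⟨b, hb⟩
      exact hb ⟨0, hnc b⟩
    exact ⟨⟨fun hd => absurd hd hnd, fun ho => absurd ho hopp⟩,
      ⟨fun _ => hopp, fun _ => hnc⟩⟩
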